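/- Let (x_i)_{i∈Λ} be a finite strictly increasing family of reals in an interval J = [A, B] with A > 0, and suppose there is α > 0 such that x_{i+1} − x_{i−1} ≥ α·x_i whenever x_{i−1}, x_{i+1} ∈ J. Let J^k = [σ^k A, σ^{k+1} A] for 0 ≤ k < N be a geometric partition of J (σ^N A = B, σ > 1). Then the number of indices i with (x_{i−1}, x_{i+1}) ⊆ J^k is at most 2(σ−1)/α, and hence the total number of indices i with x_i ∈ J is at most 2N(σ−1)/α + 2N. -/

import Mathlib

open Finset

private lemma ioo_sub_icc {a b c d : ℝ} (hab : a < b) (h : Set.Ioo a b ⊆ Set.Icc c d) :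
    c ≤ a ∧ b ≤ d := by
  constructor
  · by_contra hc
    push_neg at hc
    obtain ⟨y, hy1, hy2⟩ := exists_between (lt_min hab hc)
    exact absurd ((h ⟨hy1, hy2.trans_le (min_le_left _ _)⟩).1)
      (not_le.mpr (hy2.trans_le (min_le_right _ _)))
  · by_contra hd
    push_neg at hd
    obtain ⟨y, hy1, hy2⟩ := exists_between (max_lt hab hd)
    exact absurd ((h ⟨(le_max_left _ _).trans_lt hy1, hy2⟩).2)
      (not_le.mpr ((le_max_right _ _).trans_lt hy1))

/-- Key disjoint-interval packing: if indices in `S` are pairwise separated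
(`i < j → i + 1 ≤ j - 1`), each interval `[x(i-1), x(i+1)]` starts above `c` and
has length at least `L`, then stacking them gives `c + |S| * L ≤ x (j+1)` for the
maximal element `j`. -/
private lemma stack (x : ℤ → ℝ) (hmono : StrictMono x) (c L : ℝ) (S : Finset ℤ)
    (hsep : ∀ i ∈ S, ∀ j ∈ S, i < j → i + 1 ≤ j - 1)
    (hlow : ∀ i ∈ S, c ≤ x (i - 1))
    (hgap : ∀ i ∈ S, L ≤ x (i + 1) - x (i - 1)) :
    S = ∅ ∨ ∃ j ∈ S, (∀ i ∈ S, i ≤ j) ∧ c + S.card * L ≤ x (j + 1) := by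
  revert hsep hlow hgap
  induction S using Finset.induction_on_max with
  | empty => intro _ _ _; left; rfl
  | insert a S ha ih =>
    intro hsep hlow hgap
    right
    have haS : a ∉ S := fun h => lt_irrefl a (ha a h)
    have hmemS : ∀ i ∈ S, i ∈ insert a S := fun i hi => mem_insert_of_mem hi
    rcases ih (fun i hi j hj hij => hsep i (hmemS i hi) j (hmemS j hj) hij)
        (fun i hi => hlow i (hmemS i hi)) (fun i hi => hgap i (hmemS i hi)) with
      hE | ⟨j, hjS, hjmax, hjle⟩
    · refine ⟨a, mem_insert_self a S, ?_, ?_⟩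
      · intro i hi
        rcases mem_insert.mp hi with rfl | hi
        · exact le_refl i
        · exact (ha i hi).le
      · have h1 := hlow a (mem_insert_self a S)
        have h2 := hgap a (mem_insert_self a S)
        subst hE
        simp only [card_insert_of_notMem haS, card_empty]
        push_cast
        linarith
    · refine ⟨a, mem_insert_self a S, ?_, ?_⟩
      · intro i hi
        rcases mem_insert.mp hi with rfl | hi
        · exact le_refl i
        · exact (ha i hi).le
      · have hja : j < a := ha j hjS
        have hs := hsep j (hmemS j hjS) a (mem_insert_self a S) hja
        have hx1 : x (j + 1) ≤ x (a - 1) := hmono.monotone (by omega)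
        have h2 := hgap a (mem_insert_self a S)
        rw [card_insert_of_notMem haS]
        push_cast
        linarith

private lemma card_le_two_of_close (S : Finset ℤ)
    (h : ∀ i ∈ S, ∀ j ∈ S, i < j → j ≤ i + 1) : S.card ≤ 2 := by
  rcases S.eq_empty_or_nonempty with rfl | hne
  · simp
  · have hsub : S ⊆ Finset.Icc (S.min' hne) (S.min' hne + 1) := by
      intro i hi
      rw [Finset.mem_Icc]
      refine ⟨S.min'_le i hi, ?_⟩
      rcases lt_or_eq_of_le (S.min'_le i hi) with hlt | heq
      · exact h _ (S.min'_mem hne) i hi hlt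
      · omega
    calc S.card ≤ (Finset.Icc (S.min' hne) (S.min' hne + 1)).card := card_le_card hsub
      _ ≤ 2 := by rw [Int.card_Icc]; omega

/-- Counting lemma: for a strictly increasing sequence in `J = [A,B]` with gaps
`x_{i+1} − x_{i−1} ≥ α x_i`, each cell `J^k = [σ^k A, σ^{k+1} A]` of the geometric
partition captures at most `2(σ−1)/α` indices, and the total number of indices with
`x_i ∈ J` is at most `2N(σ−1)/α + 2N`. -/
theorem stmt9 (x : ℤ → ℝ) (hmono : StrictMono x) (A B α σ : ℝ) (N : ℕ)
    (hA : 0 < A) (hα : 0 < α) (hσ : 1 < σ) (hN : 1 ≤ N) (hB : σ ^ N * A = B)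
    (hgap : ∀ i : ℤ, x (i - 1) ∈ Set.Icc A B → x (i + 1) ∈ Set.Icc A B →
      α * x i ≤ x (i + 1) - x (i - 1)) :
    (∀ k < N, ∀ S : Finset ℤ,
      (∀ i ∈ S, Set.Ioo (x (i - 1)) (x (i + 1)) ⊆ Set.Icc (σ ^ k * A) (σ ^ (k + 1) * A)) →
      (S.card : ℝ) ≤ 2 * (σ - 1) / α) ∧
    (∀ Λ : Finset ℤ, (∀ i ∈ Λ, x i ∈ Set.Icc A B) →
      (Λ.card : ℝ) ≤ 2 * (N : ℝ) * (σ - 1) / α + 2 * (N : ℝ)) := by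
  classical
  have hσ0 : (0:ℝ) < σ := lt_trans one_pos hσ
  have hxlt : ∀ i : ℤ, x (i - 1) < x (i + 1) := fun i => hmono (by omega)
  have hxl : ∀ i : ℤ, x (i - 1) < x i := fun i => hmono (by omega)
  have hxr : ∀ i : ℤ, x i < x (i + 1) := fun i => hmono (by omega)
  -- Part 1
  have part1 : ∀ k < N, ∀ S : Finset ℤ,
      (∀ i ∈ S, Set.Ioo (x (i - 1)) (x (i + 1)) ⊆ Set.Icc (σ ^ k * A) (σ ^ (k + 1) * A)) →
      (S.card : ℝ) ≤ 2 * (σ - 1) / α := by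
    intro k hk S hS
    set c : ℝ := σ ^ k * A with hc
    set d : ℝ := σ ^ (k + 1) * A with hd
    have hc0 : 0 < c := by positivity
    have hAc : A ≤ c := by
      have : (1:ℝ) ≤ σ ^ k := by simpa using pow_le_pow_right₀ hσ.le (Nat.zero_le k)
      nlinarith
    have hdB : d ≤ B := by
      rw [← hB, hd]
      have : σ ^ (k + 1) ≤ σ ^ N := pow_le_pow_right₀ hσ.le (by omega)
      nlinarith
    -- basic facts for each i ∈ S
    have hfacts : ∀ i ∈ S, c ≤ x (i - 1) ∧ x (i + 1) ≤ d ∧ α * c ≤ x (i + 1) - x (i - 1) := by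
      intro i hi
      obtain ⟨h1, h2⟩ := ioo_sub_icc (hxlt i) (hS i hi)
      have hm1 : x (i - 1) ∈ Set.Icc A B := ⟨hAc.trans h1, ((hxlt i).le.trans h2).trans hdB⟩
      have hm2 : x (i + 1) ∈ Set.Icc A B := ⟨hAc.trans (h1.trans (hxlt i).le), h2.trans hdB⟩
      have hg := hgap i hm1 hm2
      have hcx : c ≤ x i := h1.trans (hxl i).le
      refine ⟨h1, h2, ?_⟩
      nlinarith
    -- parity split
    have hclass : ∀ (P : ℤ → Prop) [DecidablePred P],
        (∀ i j : ℤ, P i → P j → i < j → i + 1 ≤ j - 1) →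
        ((S.filter P).card : ℝ) ≤ (σ - 1) / α := by
      intro P _ hP
      set S' := S.filter P with hS'
      have hmem : ∀ i ∈ S', i ∈ S := fun i hi => (mem_filter.mp hi).1
      rcases stack x hmono c (α * c) S'
          (fun i hi j hj hij => hP i j (mem_filter.mp hi).2 (mem_filter.mp hj).2 hij)
          (fun i hi => (hfacts i (hmem i hi)).1)
          (fun i hi => (hfacts i (hmem i hi)).2.2) with hE | ⟨j, hjS, _, hle⟩
      · rw [hE]; simp only [card_empty, Nat.cast_zero]
        apply div_nonneg <;> linarith
      · have hjd : x (j + 1) ≤ d := (hfacts j (hmem j hjS)).2.1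
        have hdc : d - c = (σ - 1) * c := by rw [hc, hd]; ring
        have h1 : ((S'.card : ℝ) * α) * c ≤ (σ - 1) * c := by linarith
        have h2 : (S'.card : ℝ) * α ≤ σ - 1 := le_of_mul_le_mul_right h1 hc0
        rw [le_div_iff₀ hα]
        exact h2
    have heven := hclass (fun i => i % 2 = 0) (by intro i j hi hj hij; omega)
    have hodd := hclass (fun i => ¬ (i % 2 = 0)) (by intro i j hi hj hij; omega)
    have hcard : S.card = (S.filter (fun i => i % 2 = 0)).card
        + (S.filter (fun i => ¬ (i % 2 = 0))).card :=
      (Finset.card_filter_add_card_filter_not _).symm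
    have : (S.card : ℝ) = ((S.filter (fun i => i % 2 = 0)).card : ℝ)
        + ((S.filter (fun i => ¬ (i % 2 = 0))).card : ℝ) := by
      rw [hcard]; push_cast; ring
    rw [this]
    have : 2 * (σ - 1) / α = (σ - 1) / α + (σ - 1) / α := by ring
    rw [this]
    exact add_le_add heven hodd
  refine ⟨part1, ?_⟩
  -- Part 2
  intro Λ hΛ
  set Sk : ℕ → Finset ℤ := fun k =>
    Λ.filter (fun i => Set.Ioo (x (i - 1)) (x (i + 1)) ⊆ Set.Icc (σ ^ k * A) (σ ^ (k + 1) * A))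
    with hSk
  set T : ℕ → Finset ℤ := fun l =>
    Λ.filter (fun i => x (i - 1) < σ ^ l * A ∧ σ ^ l * A < x (i + 1)) with hT
  -- coverage
  have hcover : Λ ⊆ ((Finset.range N).biUnion Sk) ∪ ((Finset.range (N + 1)).biUnion T) := by
    intro i hi
    obtain ⟨hAi, hiB⟩ := hΛ i hi
    by_cases hcross : ∃ l, l < N + 1 ∧ x (i - 1) < σ ^ l * A ∧ σ ^ l * A < x (i + 1)
    · obtain ⟨l, hl, h1, h2⟩ := hcross
      exact mem_union_right _ (mem_biUnion.mpr ⟨l, mem_range.mpr hl, mem_filter.mpr ⟨hi, h1, h2⟩⟩)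
    · push_neg at hcross
      have hAx : A ≤ x (i - 1) := by
        by_contra hAx
        push_neg at hAx
        have := hcross 0 (by omega) (by simpa using hAx)
        simp only [pow_zero, one_mul] at this
        have : A < x (i + 1) := lt_of_le_of_lt hAi (hxr i)
        linarith [hcross 0 (by omega) (by simpa using hAx)]
      set P : ℕ → Prop := fun l => σ ^ l * A ≤ x (i - 1) with hP
      have hP0 : P 0 := by simpa [hP] using hAx
      set k := Nat.findGreatest P N with hkdef
      have hPk : P k := Nat.findGreatest_spec (Nat.zero_le N) hP0
      have hkN : k ≤ N := Nat.findGreatest_le N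
      have hklt : k < N := by
        rcases lt_or_eq_of_le hkN with h | h
        · exact h
        · exfalso
          have : σ ^ N * A ≤ x (i - 1) := by rw [← h]; exact hPk
          rw [hB] at this
          linarith [hxl i]
      have hnot : ¬ P (k + 1) := by
        apply Nat.findGreatest_is_greatest
        · rw [← hkdef]; omega
        · omega
      have h1 : x (i - 1) < σ ^ (k + 1) * A := by
        simpa [hP] using not_le.mp hnot
      have h2 : x (i + 1) ≤ σ ^ (k + 1) * A := by
        by_contra h2
        push_neg at h2
        exact absurd (hcross (k + 1) (by omega) h1) (not_le.mpr h2)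
      refine mem_union_left _ (mem_biUnion.mpr ⟨k, mem_range.mpr hklt, mem_filter.mpr ⟨hi, ?_⟩⟩)
      intro y hy
      exact ⟨le_of_lt (lt_of_le_of_lt hPk hy.1), le_trans hy.2.le h2⟩
  -- bounds on T
  have hT2 : ∀ l, ((T l).card) ≤ 2 := by
    intro l
    apply card_le_two_of_close
    intro i hi j hj hij
    obtain ⟨_, hi1, hi2⟩ := mem_filter.mp hi
    obtain ⟨_, hj1, hj2⟩ := mem_filter.mp hj
    by_contra hc
    push_neg at hc
    have : x (i + 1) ≤ x (j - 1) := hmono.monotone (by omega)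
    linarith
  have hT0 : ((T 0).card) ≤ 1 := by
    apply Finset.card_le_one.mpr
    intro i hi j hj
    obtain ⟨hiΛ, hi1, _⟩ := mem_filter.mp hi
    obtain ⟨hjΛ, hj1, _⟩ := mem_filter.mp hj
    simp only [pow_zero, one_mul] at hi1 hj1
    by_contra hne
    rcases lt_trichotomy i j with h | h | h
    · have : x i ≤ x (j - 1) := hmono.monotone (by omega)
      linarith [(hΛ i hiΛ).1]
    · exact hne h
    · have : x j ≤ x (i - 1) := hmono.monotone (by omega)
      linarith [(hΛ j hjΛ).1]
  have hTN : ((T N).card) ≤ 1 := by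
    apply Finset.card_le_one.mpr
    intro i hi j hj
    obtain ⟨hiΛ, _, hi2⟩ := mem_filter.mp hi
    obtain ⟨hjΛ, _, hj2⟩ := mem_filter.mp hj
    rw [hB] at hi2 hj2
    by_contra hne
    rcases lt_trichotomy i j with h | h | h
    · have : x (i + 1) ≤ x j := hmono.monotone (by omega)
      linarith [(hΛ j hjΛ).2]
    · exact hne h
    · have : x (j + 1) ≤ x i := hmono.monotone (by omega)
      linarith [(hΛ i hiΛ).2]
  -- sum over T
  obtain ⟨M, rfl⟩ : ∃ M, N = M + 1 := ⟨N - 1, by omega⟩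
  have hsumT : (∑ l ∈ Finset.range (M + 1 + 1), ((T l).card)) ≤ 2 * (M + 1) := by
    rw [Finset.sum_range_succ, Finset.sum_range_succ']
    have hmid : (∑ l ∈ Finset.range M, ((T (l + 1)).card)) ≤ ∑ l ∈ Finset.range M, 2 :=
      Finset.sum_le_sum (fun l _ => hT2 (l + 1))
    simp only [Finset.sum_const, smul_eq_mul, card_range] at hmid
    omega
  -- sum over Sk
  have hsumS : (∑ k ∈ Finset.range (M + 1), ((Sk k).card : ℝ)) ≤ (M + 1) * (2 * (σ - 1) / α) := by
    have : ∀ k ∈ Finset.range (M + 1), ((Sk k).card : ℝ) ≤ 2 * (σ - 1) / α := by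
      intro k hk
      exact part1 k (mem_range.mp hk) (Sk k) (fun i hi => (mem_filter.mp hi).2)
    calc (∑ k ∈ Finset.range (M + 1), ((Sk k).card : ℝ))
        ≤ ∑ k ∈ Finset.range (M + 1), (2 * (σ - 1) / α) := Finset.sum_le_sum this
      _ = (M + 1) * (2 * (σ - 1) / α) := by rw [Finset.sum_const, card_range]; push_cast; ring
  -- combine
  have hc1 : Λ.card ≤ ((Finset.range (M + 1)).biUnion Sk).card
      + ((Finset.range (M + 1 + 1)).biUnion T).card :=
    le_trans (card_le_card hcover) (card_union_le _ _)
  have hc2 : ((Finset.range (M + 1)).biUnion Sk).card ≤ ∑ k ∈ Finset.range (M + 1), (Sk k).card :=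
    card_biUnion_le
  have hc3 : ((Finset.range (M + 1 + 1)).biUnion T).card
      ≤ ∑ l ∈ Finset.range (M + 1 + 1), (T l).card := card_biUnion_le
  have hreal : (Λ.card : ℝ) ≤ (∑ k ∈ Finset.range (M + 1), ((Sk k).card : ℝ))
      + ((2 : ℝ) * (M + 1)) := by
    have h4 : Λ.card ≤ (∑ k ∈ Finset.range (M + 1), (Sk k).card) + 2 * (M + 1) := by omega
    calc (Λ.card : ℝ) ≤ ((∑ k ∈ Finset.range (M + 1), (Sk k).card) + 2 * (M + 1) : ℕ) := by
          exact_mod_cast h4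
      _ = (∑ k ∈ Finset.range (M + 1), ((Sk k).card : ℝ)) + (2 : ℝ) * (M + 1) := by push_cast; ring
  have heq : ((M:ℝ) + 1) * (2 * (σ - 1) / α) = 2 * ((M:ℝ) + 1) * (σ - 1) / α := by ring
  push_cast
  linarith [hsumS, hreal, heq]
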